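/- Let ψ ∈ H¹(ℝ^d) and set √ρ := |ψ|. If φ ∈ L^∞(ℝ^d) satisfies ‖φ‖_{L^∞} ≤ 1 and √ρ · φ = ψ almost everywhere, then ∇√ρ = Re(φ̄ ∇ψ) almost everywhere and ∇√ρ ∈ L²(ℝ^d). -/

import Mathlib

open MeasureTheory Complex

noncomputable section

/-- Partial derivative of a complex-valued function in direction `i`. -/
def pdc {d : ℕ} (i : Fin d) (f : EuclideanSpace ℝ (Fin d) → ℂ)
    (x : EuclideanSpace ℝ (Fin d)) : ℂ :=
  fderiv ℝ f x (EuclideanSpace.single i 1)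

/-- Partial derivative of a real-valued function in direction `i`. -/
def pd {d : ℕ} (i : Fin d) (f : EuclideanSpace ℝ (Fin d) → ℝ)
    (x : EuclideanSpace ℝ (Fin d)) : ℝ :=
  fderiv ℝ f x (EuclideanSpace.single i 1)

/-- Auxiliary: a differentiable real-valued function vanishing on a measurable set `s`
has vanishing derivative a.e. on `s` (via Lebesgue density points). -/
lemma aux_fderiv_zero_real {d : ℕ} (hd : 0 < d) (f : EuclideanSpace ℝ (Fin d) → ℝ)
    (hf : Differentiable ℝ f) {s : Set (EuclideanSpace ℝ (Fin d))} (hs : MeasurableSet s)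
    (h0 : ∀ x ∈ s, f x = 0) :
    ∀ᵐ x ∂(volume.restrict s), fderiv ℝ f x = 0 := by
  set v : EuclideanSpace ℝ (Fin d) := EuclideanSpace.single ⟨0, hd⟩ 1 with hv
  have hv0 : v ≠ 0 := by
    intro h
    have : ‖v‖ = 1 := by simp [hv]
    rw [h] at this; simp at this
  set g : EuclideanSpace ℝ (Fin d) → EuclideanSpace ℝ (Fin d) := fun y => f y • v with hg
  have hgder : ∀ x, HasFDerivAt g ((fderiv ℝ f x).smulRight v) x :=
    fun x => (hf x).hasFDerivAt.smul_const v
  have happrox : ApproximatesLinearOn g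
      (0 : EuclideanSpace ℝ (Fin d) →L[ℝ] EuclideanSpace ℝ (Fin d)) s 0 := by
    intro x hx y hy
    simp [hg, h0 x hx, h0 y hy]
  have H := happrox.norm_fderiv_sub_le (μ := volume) hs (fun x => fderiv ℝ g x)
    (fun x _ => (hgder x).differentiableAt.hasFDerivAt.hasFDerivWithinAt)
  filter_upwards [H] with x hx
  have hg0 : fderiv ℝ g x = 0 := by
    have : ‖fderiv ℝ g x - 0‖₊ = 0 := le_antisymm hx zero_le
    simpa [sub_eq_zero] using this
  rw [(hgder x).fderiv] at hg0
  ext w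
  have := ContinuousLinearMap.ext_iff.mp hg0 w
  simp only [ContinuousLinearMap.smulRight_apply, ContinuousLinearMap.zero_apply] at this
  rcases smul_eq_zero.mp this with h | h
  · simpa using h
  · exact absurd h hv0

/-- Auxiliary: a differentiable complex-valued function has vanishing derivative a.e.
on its zero set. -/
lemma aux_fderiv_zero_complex {d : ℕ} (ψ : EuclideanSpace ℝ (Fin d) → ℂ)
    (h : Differentiable ℝ ψ) :
    ∀ᵐ x ∂(volume : Measure (EuclideanSpace ℝ (Fin d))), ψ x = 0 → fderiv ℝ ψ x = 0 := by
  rcases Nat.eq_zero_or_pos d with hd | hd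
  · subst hd
    refine Filter.Eventually.of_forall fun x _ => ?_
    ext w
    have hw : w = 0 := by ext i; exact i.elim0
    rw [hw]; simp
  · set s := ψ ⁻¹' {0} with hsdef
    have hs : MeasurableSet s :=
      (isClosed_singleton.preimage h.continuous).measurableSet
    have hred : Differentiable ℝ (fun y => (ψ y).re) := Complex.reCLM.differentiable.comp h
    have himd : Differentiable ℝ (fun y => (ψ y).im) := Complex.imCLM.differentiable.comp h
    have hre := aux_fderiv_zero_real hd (fun y => (ψ y).re) hred hs
      (fun x hx => by have hx' : ψ x = 0 := hx; simp [hx'])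
    have him := aux_fderiv_zero_real hd (fun y => (ψ y).im) himd hs
      (fun x hx => by have hx' : ψ x = 0 := hx; simp [hx'])
    filter_upwards [ae_imp_of_ae_restrict (hre.and him)] with x hx hψx
    obtain ⟨h1, h2⟩ := hx (by simp [hsdef, hψx])
    have hre' : fderiv ℝ (fun y => (ψ y).re) x = Complex.reCLM.comp (fderiv ℝ ψ x) :=
      (Complex.reCLM.hasFDerivAt.comp x (h x).hasFDerivAt).fderiv
    have him' : fderiv ℝ (fun y => (ψ y).im) x = Complex.imCLM.comp (fderiv ℝ ψ x) :=
      (Complex.imCLM.hasFDerivAt.comp x (h x).hasFDerivAt).fderiv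
    rw [hre'] at h1; rw [him'] at h2
    ext w
    have e1 := ContinuousLinearMap.ext_iff.mp h1 w
    have e2 := ContinuousLinearMap.ext_iff.mp h2 w
    simp only [ContinuousLinearMap.comp_apply, ContinuousLinearMap.zero_apply,
      Complex.reCLM_apply, Complex.imCLM_apply] at e1 e2
    simp [Complex.ext_iff, e1, e2]

/-- Polar factorization, first part: if `ψ ∈ H¹(ℝ^d)`, `√ρ := |ψ|` and `φ` is a
polar factor of `ψ` (`‖φ‖_∞ ≤ 1` and `|ψ|·φ = ψ` a.e.), then
`∇√ρ = Re(φ̄ ∇ψ)` a.e. and `∇√ρ ∈ L²(ℝ^d)`. -/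
theorem polar_factorization_gradient_abs {d : ℕ}
    (ψ φ : EuclideanSpace ℝ (Fin d) → ℂ)
    (hψdiff : Differentiable ℝ ψ)
    (hψL2 : MemLp ψ 2 volume)
    (hgradL2 : MemLp (fun x => fderiv ℝ ψ x) 2 volume)
    (hφmeas : AEStronglyMeasurable φ volume)
    (hφ : ∀ᵐ x ∂volume, ‖φ x‖ ≤ 1)
    (hpolar : ∀ᵐ x ∂volume, (‖ψ x‖ : ℂ) * φ x = ψ x) :
    (∀ᵐ x ∂volume, ∀ i : Fin d,
        pd i (fun y => ‖ψ y‖) x = ((starRingEnd ℂ) (φ x) * pdc i ψ x).re)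
    ∧ MemLp (fun x => (WithLp.toLp 2 (fun i => pd i (fun y => ‖ψ y‖) x) :
        EuclideanSpace ℝ (Fin d))) 2 volume := by
  have hz := aux_fderiv_zero_complex ψ hψdiff
  have part1 : ∀ᵐ x ∂volume, ∀ i : Fin d,
      pd i (fun y => ‖ψ y‖) x = ((starRingEnd ℂ) (φ x) * pdc i ψ x).re := by
    filter_upwards [hz, hpolar] with x hzx hpx
    intro i
    by_cases h0 : ψ x = 0
    · have hL : fderiv ℝ ψ x = 0 := hzx h0
      have hmin : IsLocalMin (fun y => ‖ψ y‖) x :=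
        Filter.Eventually.of_forall fun y => by simp [h0]
      rw [pd, pdc, hmin.fderiv_eq_zero, hL]
      simp
    · have hr0 : ‖ψ x‖ ≠ 0 := norm_ne_zero_iff.mpr h0
      have hφx : φ x = ψ x / (‖ψ x‖ : ℂ) := by
        rw [eq_div_iff (by exact_mod_cast Complex.ofReal_ne_zero.mpr hr0), mul_comm]
        exact hpx
      set L := fderiv ℝ ψ x with hLdef
      have hre : HasFDerivAt (fun y => (ψ y).re) (Complex.reCLM.comp L) x :=
        Complex.reCLM.hasFDerivAt.comp x (hψdiff x).hasFDerivAt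
      have him : HasFDerivAt (fun y => (ψ y).im) (Complex.imCLM.comp L) x :=
        Complex.imCLM.hasFDerivAt.comp x (hψdiff x).hasFDerivAt
      have hq : HasFDerivAt (fun y => (ψ y).re * (ψ y).re + (ψ y).im * (ψ y).im)
          (((ψ x).re • Complex.reCLM.comp L + (ψ x).re • Complex.reCLM.comp L) +
           ((ψ x).im • Complex.imCLM.comp L + (ψ x).im • Complex.imCLM.comp L)) x :=
        (hre.mul hre).add (him.mul him)
      have hqx : (ψ x).re * (ψ x).re + (ψ x).im * (ψ x).im ≠ 0 := by
        have := Complex.normSq_pos.mpr h0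
        simpa [Complex.normSq_apply] using this.ne'
      have hsqrt := hq.sqrt hqx
      have hfun : (fun y => ‖ψ y‖) =
          fun y => Real.sqrt ((ψ y).re * (ψ y).re + (ψ y).im * (ψ y).im) := by
        funext y
        rw [Complex.norm_def, Complex.normSq_apply]
      have hrsq : Real.sqrt ((ψ x).re * (ψ x).re + (ψ x).im * (ψ x).im) = ‖ψ x‖ := by
        rw [Complex.norm_def, Complex.normSq_apply]
      rw [pd, hfun, hsqrt.fderiv, hφx, pdc, ← hLdef]
      simp only [ContinuousLinearMap.coe_smul', Pi.smul_apply, ContinuousLinearMap.add_apply,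
        ContinuousLinearMap.smul_apply, ContinuousLinearMap.comp_apply, Complex.reCLM_apply,
        Complex.imCLM_apply, smul_eq_mul, hrsq, map_div₀, Complex.conj_ofReal,
        div_mul_eq_mul_div, Complex.div_ofReal_re, Complex.mul_re, Complex.conj_re,
        Complex.conj_im]
      field_simp
      ring
  refine ⟨part1, ?_⟩
  obtain ⟨φ', hφ'sm, hφφ'⟩ := hφmeas
  set F : EuclideanSpace ℝ (Fin d) → EuclideanSpace ℝ (Fin d) :=
    fun x => (WithLp.toLp 2 (fun i => pd i (fun y => ‖ψ y‖) x) : EuclideanSpace ℝ (Fin d)) with hF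
  set G : EuclideanSpace ℝ (Fin d) → EuclideanSpace ℝ (Fin d) :=
    fun x => (WithLp.toLp 2 (fun i => ((starRingEnd ℂ) (φ' x) *
      fderiv ℝ ψ x (EuclideanSpace.single i 1)).re) : EuclideanSpace ℝ (Fin d)) with hG
  have hGmeas : Measurable G := by
    refine (WithLp.measurable_toLp ..).comp (measurable_pi_iff.mpr fun i => ?_)
    refine Complex.measurable_re.comp (Measurable.mul ?_ (measurable_fderiv_apply_const ℝ ψ _))
    exact Complex.conjCLE.continuous.measurable.comp hφ'sm.measurable
  have hFG : F =ᵐ[volume] G := by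
    filter_upwards [part1, hφφ'] with x h1 h2
    ext i
    rw [hF]
    simp only [hG, PiLp.toLp_apply]
    rw [h1 i, h2, pdc]
  have hFmeas : AEStronglyMeasurable F volume :=
    hGmeas.aestronglyMeasurable.congr hFG.symm
  refine MemLp.of_le_mul (c := Real.sqrt d) hgradL2 hFmeas ?_
  filter_upwards [part1, hφ] with x h1 h2
  have hcoord : ∀ i, ‖F x i‖ ≤ ‖fderiv ℝ ψ x‖ := by
    intro i
    have : F x i = ((starRingEnd ℂ) (φ x) * pdc i ψ x).re := h1 i
    rw [Real.norm_eq_abs, this]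
    calc |((starRingEnd ℂ) (φ x) * pdc i ψ x).re|
        ≤ ‖(starRingEnd ℂ) (φ x) * pdc i ψ x‖ := Complex.abs_re_le_norm _
      _ = ‖φ x‖ * ‖pdc i ψ x‖ := by rw [norm_mul, RCLike.norm_conj]
      _ ≤ 1 * ‖pdc i ψ x‖ := by gcongr
      _ = ‖fderiv ℝ ψ x (EuclideanSpace.single i 1)‖ := by rw [one_mul, pdc]
      _ ≤ ‖fderiv ℝ ψ x‖ * ‖EuclideanSpace.single i (1:ℝ)‖ :=
          (fderiv ℝ ψ x).le_opNorm _
      _ = ‖fderiv ℝ ψ x‖ := by simp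
  rw [EuclideanSpace.norm_eq]
  calc Real.sqrt (∑ i, ‖F x i‖ ^ 2) ≤ Real.sqrt (∑ _i : Fin d, ‖fderiv ℝ ψ x‖ ^ 2) :=
        Real.sqrt_le_sqrt (Finset.sum_le_sum fun i _ => pow_le_pow_left₀ (norm_nonneg _) (hcoord i) 2)
    _ = Real.sqrt d * ‖fderiv ℝ ψ x‖ := by
        rw [Finset.sum_const, Finset.card_univ, Fintype.card_fin, nsmul_eq_mul,
          Real.sqrt_mul (Nat.cast_nonneg _), Real.sqrt_sq (norm_nonneg _)]

end
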